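/- Let 0 < q < p ≤ 1 and let n ≥ 1 be a natural number. Then the (p,q)-Bernstein operator reproduces the test functions e₀(t)=1, e₁(t)=t and satisfies: B_{n,p,q}(1;x) = 1, B_{n,p,q}(t;x) = x, and B_{n,p,q}(t²;x) = (p^{n-1}/[n]_{p,q}) x + (q [n-1]_{p,q}/[n]_{p,q}) x², for every x ∈ [0,1]. -/

import Mathlib

open Finset Set Filter Topology

/-- The (p,q)-integer `[n]_{p,q} = ∑_{i=0}^{n-1} p^(n-1-i) q^i`. -/
noncomputable def pqInt (p q : ℝ) (n : ℕ) : ℝ :=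
  ∑ i ∈ Finset.range n, p ^ (n - 1 - i) * q ^ i

/-- The (p,q)-factorial `[n]_{p,q}! = ∏_{j=1}^n [j]_{p,q}`. -/
noncomputable def pqFactorial (p q : ℝ) (n : ℕ) : ℝ :=
  ∏ j ∈ Finset.range n, pqInt p q (j + 1)

/-- The (p,q)-binomial coefficient. -/
noncomputable def pqChoose (p q : ℝ) (n k : ℕ) : ℝ :=
  pqFactorial p q n / (pqFactorial p q k * pqFactorial p q (n - k))

/-- The node `p^(n-k) [k]_{p,q} / [n]_{p,q}` of the (p,q)-Bernstein operator. -/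
noncomputable def pqNode (p q : ℝ) (n k : ℕ) : ℝ :=
  p ^ (n - k) * pqInt p q k / pqInt p q n

/-- The basis function
`p^((k(k-1)-n(n-1))/2) C(n,k)_{p,q} x^k ∏_{s=0}^{n-k-1} (p^s - q^s x)`,
where `p^((k(k-1)-n(n-1))/2)` is written as `p^(k(k-1)/2) / p^(n(n-1)/2)`. -/
noncomputable def pqBasis (p q : ℝ) (n k : ℕ) (x : ℝ) : ℝ :=
  (p ^ (k.choose 2) / p ^ (n.choose 2)) * pqChoose p q n k * x ^ k *
    ∏ s ∈ Finset.range (n - k), (p ^ s - q ^ s * x)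

/-- The (p,q)-Bernstein operator `B_{n,p,q}(f;x)`. -/
noncomputable def pqBernstein (p q : ℝ) (n : ℕ) (f : ℝ → ℝ) (x : ℝ) : ℝ :=
  ∑ k ∈ Finset.range (n + 1), pqBasis p q n k x * f (pqNode p q n k)

/-- The bivariate (p,q)-Bernstein operator
`B_{n,m}^{(p₁,q₁),(p₂,q₂)}(f;x,y)`. -/
noncomputable def pqBernstein2 (p₁ q₁ p₂ q₂ : ℝ) (n m : ℕ)
    (f : ℝ → ℝ → ℝ) (x y : ℝ) : ℝ :=
  ∑ k ∈ Finset.range (n + 1), ∑ j ∈ Finset.range (m + 1),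
    pqBasis p₁ q₁ n k x * pqBasis p₂ q₂ m j y *
      f (pqNode p₁ q₁ n k) (pqNode p₂ q₂ m j)

section Aux
variable {p q : ℝ}

lemma pqInt_zero : pqInt p q 0 = 0 := by simp [pqInt]

lemma pqInt_one : pqInt p q 1 = 1 := by simp [pqInt]

lemma pqInt_succ_left (n : ℕ) : pqInt p q (n+1) = p ^ n + q * pqInt p q n := by
  unfold pqInt
  rw [Finset.sum_range_succ', Finset.mul_sum]
  simp only [Nat.add_sub_cancel, pow_zero, mul_one]
  rw [add_comm]
  congr 1
  refine Finset.sum_congr rfl fun i hi => ?_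
  have h1 : n - (i + 1) = n - 1 - i := by omega
  rw [h1, pow_succ]
  ring

lemma pqInt_succ_right (n : ℕ) : pqInt p q (n+1) = p * pqInt p q n + q ^ n := by
  unfold pqInt
  rw [Finset.sum_range_succ, Finset.mul_sum]
  simp only [Nat.add_sub_cancel]
  congr 1
  · refine Finset.sum_congr rfl fun i hi => ?_
    simp only [Finset.mem_range] at hi
    have h1 : n - i = (n - 1 - i) + 1 := by omega
    rw [h1, pow_succ]
    ring
  · have : n - n = 0 := by omega
    simp [this]

lemma pqInt_add (a b : ℕ) :
    pqInt p q (a + b) = p ^ b * pqInt p q a + q ^ a * pqInt p q b := by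
  induction b with
  | zero => simp [pqInt_zero]
  | succ b ih =>
    have h : a + (b + 1) = (a + b) + 1 := by omega
    rw [h, pqInt_succ_left, ih, pqInt_succ_left]
    have h2 : p ^ (a + b) = p ^ b * p ^ a := by rw [← pow_add]; ring_nf
    have key : p ^ a + q * pqInt p q a = p * pqInt p q a + q ^ a := by
      rw [← pqInt_succ_left, ← pqInt_succ_right]
    linear_combination (p ^ b) * key

lemma pqInt_pos (hp : 0 < p) (hq : 0 < q) (n : ℕ) : 0 < pqInt p q (n + 1) := by
  unfold pqInt
  apply Finset.sum_pos
  · intro i _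
    positivity
  · exact ⟨0, Finset.mem_range.2 (Nat.succ_pos n)⟩

lemma pqFactorial_pos (hp : 0 < p) (hq : 0 < q) (n : ℕ) : 0 < pqFactorial p q n := by
  unfold pqFactorial
  exact Finset.prod_pos fun j _ => pqInt_pos hp hq j

lemma pqFactorial_ne (hp : 0 < p) (hq : 0 < q) (n : ℕ) : pqFactorial p q n ≠ 0 :=
  ne_of_gt (pqFactorial_pos hp hq n)

lemma pqFactorial_zero : pqFactorial p q 0 = 1 := by simp [pqFactorial]

lemma pqFactorial_succ (n : ℕ) :
    pqFactorial p q (n + 1) = pqFactorial p q n * pqInt p q (n + 1) :=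
  Finset.prod_range_succ _ _

lemma pqChoose_zero (hp : 0 < p) (hq : 0 < q) (n : ℕ) : pqChoose p q n 0 = 1 := by
  simp [pqChoose, pqFactorial_zero, div_self (pqFactorial_ne hp hq n)]

lemma pqChoose_self (hp : 0 < p) (hq : 0 < q) (n : ℕ) : pqChoose p q n n = 1 := by
  simp [pqChoose, pqFactorial_zero, div_self (pqFactorial_ne hp hq n)]

lemma pqChoose_pascal (hp : 0 < p) (hq : 0 < q) (a b : ℕ) :
    pqChoose p q (a + b + 2) (a + 1) =
      p ^ (a + 1) * pqChoose p q (a + b + 1) (a + 1) +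
      q ^ (b + 1) * pqChoose p q (a + b + 1) a := by
  have hsub1 : a + b + 2 - (a + 1) = b + 1 := by omega
  have hsub2 : a + b + 1 - (a + 1) = b := by omega
  have hsub3 : a + b + 1 - a = b + 1 := by omega
  unfold pqChoose
  rw [hsub1, hsub2, hsub3]
  have hN : a + b + 2 = (a + b + 1) + 1 := by omega
  rw [hN, pqFactorial_succ]
  have hint : pqInt p q (a + b + 1 + 1) =
      p ^ (a + 1) * pqInt p q (b + 1) + q ^ (b + 1) * pqInt p q (a + 1) := by
    have h : a + b + 1 + 1 = (b + 1) + (a + 1) := by omega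
    rw [h, pqInt_add]
  rw [hint, pqFactorial_succ (a), pqFactorial_succ (b)]
  have h1 := pqFactorial_ne hp hq a
  have h2 := pqFactorial_ne hp hq b
  have h3 := ne_of_gt (pqInt_pos hp hq a)
  have h4 := ne_of_gt (pqInt_pos hp hq b)
  field_simp


lemma choose2_succ (n : ℕ) : (n + 1).choose 2 = n.choose 2 + n := by
  rw [Nat.choose_succ_succ]
  simp [Nat.choose_one_right, Nat.add_comm]

lemma pqBasis_step (hp : 0 < p) (hq : 0 < q) (x : ℝ) (j m : ℕ) :
    pqBasis p q (j + m + 2) (j + 1) x =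
      pqBasis p q (j + m + 1) (j + 1) x * (1 - (q / p) ^ m * x) +
      (q / p) ^ (m + 1) * x * pqBasis p q (j + m + 1) j x := by
  have hp' : p ≠ 0 := ne_of_gt hp
  unfold pqBasis
  have hs1 : j + m + 2 - (j + 1) = m + 1 := by omega
  have hs2 : j + m + 1 - (j + 1) = m := by omega
  have hs3 : j + m + 1 - j = m + 1 := by omega
  have hc1 : (j + m + 2).choose 2 = (j + m + 1).choose 2 + (j + m + 1) := choose2_succ _
  have hc2 : (j + 1).choose 2 = j.choose 2 + j := choose2_succ _
  have hpas : j + m + 2 = (j + m + 1) + 1 := by omega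
  rw [hs1, hs2, hs3, hc1, hc2, pqChoose_pascal hp hq j m,
    Finset.prod_range_succ, div_pow]
  have hB : p ^ ((j + m + 1).choose 2) ≠ 0 := pow_ne_zero _ hp'
  have hpm : p ^ m ≠ 0 := pow_ne_zero _ hp'
  simp only [pow_add, pow_one, div_pow]
  field_simp

lemma pqBasis_diag (hp : 0 < p) (hq : 0 < q) (x : ℝ) (n : ℕ) :
    pqBasis p q n n x = x ^ n := by
  simp [pqBasis, pqChoose_self hp hq, Nat.sub_self,
    div_self (pow_ne_zero _ (ne_of_gt hp))]

lemma pqBasis_zero_step (hp : 0 < p) (hq : 0 < q) (x : ℝ) (n : ℕ) :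
    pqBasis p q (n + 1) 0 x = pqBasis p q n 0 x * (1 - (q / p) ^ n * x) := by
  have hp' : p ≠ 0 := ne_of_gt hp
  unfold pqBasis
  rw [pqChoose_zero hp hq, pqChoose_zero hp hq, choose2_succ, Nat.sub_zero,
    Nat.sub_zero, Finset.prod_range_succ, div_pow, pow_add]
  have h1 : p ^ n.choose 2 ≠ 0 := pow_ne_zero _ hp'
  have h2 : (p : ℝ) ^ n ≠ 0 := pow_ne_zero _ hp'
  field_simp
  rw [mul_comm]
  congr 1
  exact Finset.prod_congr rfl fun i _ => by ring

lemma pqBasis_sum (hp : 0 < p) (hq : 0 < q) (x : ℝ) (n : ℕ) :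
    ∑ k ∈ Finset.range (n + 1), pqBasis p q n k x = 1 := by
  induction n with
  | zero => simp [pqBasis, pqChoose, pqFactorial]
  | succ n ih =>
    have key : ∀ k ∈ Finset.range (n + 2), pqBasis p q (n + 1) k x =
        (if k ≤ n then pqBasis p q n k x * (1 - (q / p) ^ (n - k) * x) else 0) +
        (if k = 0 then 0 else (q / p) ^ (n + 1 - k) * x * pqBasis p q n (k - 1) x) := by
      intro k hk
      rw [Finset.mem_range] at hk
      match k with
      | 0 =>
        simpa using pqBasis_zero_step hp hq x n
      | (j + 1) =>
        by_cases hj : j + 1 ≤ n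
        · rw [if_pos hj, if_neg (Nat.succ_ne_zero j)]
          set m := n - (j + 1) with hm
          have e1 : n + 1 = j + m + 2 := by omega
          have e2 : n = j + m + 1 := by omega
          have e4 : n + 1 - (j + 1) = m + 1 := by omega
          rw [e4, Nat.add_sub_cancel, e1, e2]
          exact pqBasis_step hp hq x j m
        · have hk1 : j + 1 = n + 1 := by omega
          rw [hk1, if_neg (by omega), if_neg (Nat.succ_ne_zero n)]
          simp only [Nat.add_sub_cancel, Nat.sub_self, pow_zero, one_mul, zero_add]
          rw [pqBasis_diag hp hq, pqBasis_diag hp hq, pow_succ]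
          ring
    rw [Finset.sum_congr rfl key, Finset.sum_add_distrib]
    have hU : ∑ k ∈ Finset.range (n + 2),
        (if k ≤ n then pqBasis p q n k x * (1 - (q / p) ^ (n - k) * x) else 0) =
        ∑ k ∈ Finset.range (n + 1), pqBasis p q n k x * (1 - (q / p) ^ (n - k) * x) := by
      rw [Finset.sum_range_succ, if_neg (by omega), add_zero]
      refine Finset.sum_congr rfl fun k hk => ?_
      rw [Finset.mem_range] at hk
      rw [if_pos (by omega)]
    have hV : ∑ k ∈ Finset.range (n + 2),
        (if k = 0 then 0 else (q / p) ^ (n + 1 - k) * x * pqBasis p q n (k - 1) x) =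
        ∑ k ∈ Finset.range (n + 1), (q / p) ^ (n - k) * x * pqBasis p q n k x := by
      rw [Finset.sum_range_succ']
      simp [Nat.succ_sub_succ]
    rw [hU, hV, ← Finset.sum_add_distrib]
    have hc : ∑ k ∈ Finset.range (n + 1),
        (pqBasis p q n k x * (1 - (q / p) ^ (n - k) * x) +
          (q / p) ^ (n - k) * x * pqBasis p q n k x) =
        ∑ k ∈ Finset.range (n + 1), pqBasis p q n k x :=
      Finset.sum_congr rfl fun k _ => by ring
    rw [hc, ih]

lemma pqChoose_mul_int (hp : 0 < p) (hq : 0 < q) (k m : ℕ) :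
    pqChoose p q (k + m + 1) (k + 1) * pqInt p q (k + 1) =
      pqChoose p q (k + m) k * pqInt p q (k + m + 1) := by
  unfold pqChoose
  have hs1 : k + m + 1 - (k + 1) = m := by omega
  have hs2 : k + m - k = m := by omega
  rw [hs1, hs2, pqFactorial_succ (k + m), pqFactorial_succ k]
  have h1 := pqFactorial_ne hp hq k
  have h2 := pqFactorial_ne hp hq m
  have h3 := pqFactorial_ne hp hq (k + m)
  have h4 := ne_of_gt (pqInt_pos hp hq k)
  field_simp

lemma pqBasis_node (hp : 0 < p) (hq : 0 < q) (x : ℝ) (k m : ℕ) :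
    pqBasis p q (k + m + 1) (k + 1) x * pqNode p q (k + m + 1) (k + 1) =
      x * pqBasis p q (k + m) k x := by
  have hp' : p ≠ 0 := ne_of_gt hp
  have hN := ne_of_gt (pqInt_pos hp hq (k + m))
  have hk1 := ne_of_gt (pqInt_pos hp hq k)
  have hCh : pqChoose p q (k + m + 1) (k + 1) =
      pqChoose p q (k + m) k * pqInt p q (k + m + 1) / pqInt p q (k + 1) := by
    rw [eq_div_iff hk1]
    exact pqChoose_mul_int hp hq k m
  unfold pqBasis pqNode
  have hs1 : k + m + 1 - (k + 1) = m := by omega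
  have hs2 : k + m - k = m := by omega
  have hc1 : (k + m + 1).choose 2 = (k + m).choose 2 + (k + m) := choose2_succ _
  have hc2 : (k + 1).choose 2 = k.choose 2 + k := choose2_succ _
  rw [hs1, hs2, hc1, hc2, hCh]
  have hB : p ^ ((k + m).choose 2) ≠ 0 := pow_ne_zero _ hp'
  field_simp
  ring

lemma pqNode_rec (hp : 0 < p) (hq : 0 < q) (k m : ℕ) :
    pqNode p q (k + m + 1) (k + 1) =
      p ^ (k + m) / pqInt p q (k + m + 1) +
      (q * pqInt p q (k + m) / pqInt p q (k + m + 1)) * pqNode p q (k + m) k := by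
  unfold pqNode
  have hs1 : k + m + 1 - (k + 1) = m := by omega
  have hs2 : k + m - k = m := by omega
  rw [hs1, hs2, pqInt_succ_left k]
  match k with
  | 0 => simp [pqInt_zero]
  | (j + 1) =>
    have hkm := ne_of_gt (pqInt_pos hp hq (j + m))
    have hN := ne_of_gt (pqInt_pos hp hq (j + m + 1))
    have h : j + 1 + m = j + m + 1 := by omega
    rw [h]
    field_simp
    ring

lemma pqNode_zero (n : ℕ) : pqNode p q n 0 = 0 := by
  simp [pqNode, pqInt_zero]

lemma pqMoment1 (hp : 0 < p) (hq : 0 < q) (x : ℝ) (n : ℕ) :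
    ∑ k ∈ Finset.range (n + 2), pqBasis p q (n + 1) k x * pqNode p q (n + 1) k = x := by
  rw [Finset.sum_range_succ']
  rw [pqNode_zero, mul_zero, add_zero]
  have hterm : ∀ k ∈ Finset.range (n + 1),
      pqBasis p q (n + 1) (k + 1) x * pqNode p q (n + 1) (k + 1) =
        x * pqBasis p q n k x := by
    intro k hk
    rw [Finset.mem_range] at hk
    have e : n + 1 = k + (n - k) + 1 := by omega
    have e2 : n = k + (n - k) := by omega
    rw [e]
    nth_rewrite 3 [e2]
    exact pqBasis_node hp hq x k (n - k)
  rw [Finset.sum_congr rfl hterm, ← Finset.mul_sum, pqBasis_sum hp hq, mul_one]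

lemma pqMoment2 (hp : 0 < p) (hq : 0 < q) (x : ℝ) (n : ℕ) :
    ∑ k ∈ Finset.range (n + 2), pqBasis p q (n + 1) k x * (pqNode p q (n + 1) k) ^ 2 =
      p ^ n / pqInt p q (n + 1) * x + q * pqInt p q n / pqInt p q (n + 1) * x ^ 2 := by
  rw [Finset.sum_range_succ', pqNode_zero]
  simp only [ne_eq, OfNat.ofNat_ne_zero, not_false_eq_true, zero_pow, mul_zero, add_zero]
  have hterm : ∀ k ∈ Finset.range (n + 1),
      pqBasis p q (n + 1) (k + 1) x * (pqNode p q (n + 1) (k + 1)) ^ 2 =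
        x * pqBasis p q n k x * (p ^ n / pqInt p q (n + 1)) +
        (q * pqInt p q n / pqInt p q (n + 1)) * x *
          (pqBasis p q n k x * pqNode p q n k) := by
    intro k hk
    rw [Finset.mem_range] at hk
    obtain ⟨m, hm⟩ : ∃ m, k + m = n := ⟨n - k, by omega⟩
    rw [← hm, pow_two, ← mul_assoc, pqBasis_node hp hq x k m, pqNode_rec hp hq k m]
    ring
  rw [Finset.sum_congr rfl hterm, Finset.sum_add_distrib]
  have h1 : ∑ k ∈ Finset.range (n + 1),
      x * pqBasis p q n k x * (p ^ n / pqInt p q (n + 1)) =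
      p ^ n / pqInt p q (n + 1) * x := by
    rw [← Finset.sum_mul, ← Finset.mul_sum, pqBasis_sum hp hq, mul_one, mul_comm]
  have h2 : ∑ k ∈ Finset.range (n + 1),
      (q * pqInt p q n / pqInt p q (n + 1)) * x *
        (pqBasis p q n k x * pqNode p q n k) =
      q * pqInt p q n / pqInt p q (n + 1) * x ^ 2 := by
    rw [← Finset.mul_sum]
    match n with
    | 0 => simp [pqInt_zero, pqNode_zero]
    | (n' + 1) =>
      rw [pqMoment1 hp hq x n']
      ring
  rw [h1, h2]


end Aux

theorem pqBernstein_moments_e0_e1_e2 (p q : ℝ) (n : ℕ)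
    (hq : 0 < q) (hqp : q < p) (hp : p ≤ 1) (hn : 1 ≤ n)
    (x : ℝ) (hx : x ∈ Set.Icc (0 : ℝ) 1) :
    pqBernstein p q n (fun _ => 1) x = 1 ∧
    pqBernstein p q n (fun t => t) x = x ∧
    pqBernstein p q n (fun t => t ^ 2) x =
      (p ^ (n - 1) / pqInt p q n) * x +
      (q * pqInt p q (n - 1) / pqInt p q n) * x ^ 2 := by
  have hp0 : 0 < p := lt_trans hq hqp
  obtain ⟨m, rfl⟩ : ∃ m, n = m + 1 := ⟨n - 1, by omega⟩
  unfold pqBernstein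
  refine ⟨?_, ?_, ?_⟩
  · simp only [mul_one]
    exact pqBasis_sum hp0 hq x (m + 1)
  · exact pqMoment1 hp0 hq x m
  · simpa using pqMoment2 hp0 hq x m
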